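/- Let (A, B) be a bimatrix game with zero-sum part Z = (A-B)/2 and coordination part C = (A+B)/2. If Z does not dominate C, then there exist probability vectors x ∈ Δⁿ, y ∈ Δᵐ (with strictly positive entries) such that C_{(A,B)}(x,y) < 0. -/

import Mathlib

open Finset Matrix

noncomputable def Cfun {n m : ℕ} (A B : Matrix (Fin n) (Fin m) ℝ)
    (x : Fin n → ℝ) (y : Fin m → ℝ) : ℝ :=
  -∑ j, ∑ k, x j * y k * (A j k - ∑ k', A j k' * y k') * (B j k - ∑ j', B j' k * x j')

def IsProbVec {n : ℕ} (x : Fin n → ℝ) : Prop :=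
  (∀ j, 0 ≤ x j) ∧ ∑ j, x j = 1

def Dominates {n m : ℕ} (K L : Matrix (Fin n) (Fin m) ℝ) : Prop :=
  ∀ j j' k k', |L j k + L j' k' - L j k' - L j' k| ≤ |K j k + K j' k' - K j k' - K j' k|

lemma sumw {N : ℕ} {j j' : Fin N} (h : j ≠ j') (g : Fin N → ℝ) :
    ∑ i, g i * (if i = j then (1/2:ℝ) else if i = j' then 1/2 else 0) = (g j + g j') / 2 := by
  have key : ∀ i, g i * (if i = j then (1/2:ℝ) else if i = j' then 1/2 else 0)
      = (if i = j then g j / 2 else 0) + (if i = j' then g j' / 2 else 0) := by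
    intro i
    by_cases h1 : i = j <;> by_cases h2 : i = j' <;> simp_all <;> ring
  simp_rw [key, Finset.sum_add_distrib, Finset.sum_ite_eq', Finset.mem_univ, if_true]
  ring

lemma sumw' {N : ℕ} {j j' : Fin N} (h : j ≠ j') (g : Fin N → ℝ) :
    ∑ i, (if i = j then (1/2:ℝ) else if i = j' then 1/2 else 0) * g i = (g j + g j') / 2 := by
  simp_rw [mul_comm]; exact sumw h g

lemma dsum {N M : ℕ} {j j' : Fin N} {k k' : Fin M} (hj : j ≠ j') (hk : k ≠ k')
    (F : Fin N → Fin M → ℝ) :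
    ∑ i, ∑ l, (if i = j then (1/2:ℝ) else if i = j' then 1/2 else 0) *
      ((if l = k then (1/2:ℝ) else if l = k' then 1/2 else 0) * F i l)
      = (F j k + F j k' + (F j' k + F j' k')) / 4 := by
  have h1 : ∀ i, ∑ l, (if i = j then (1/2:ℝ) else if i = j' then 1/2 else 0) *
      ((if l = k then (1/2:ℝ) else if l = k' then 1/2 else 0) * F i l)
      = (if i = j then (1/2:ℝ) else if i = j' then 1/2 else 0) * ((F i k + F i k') / 2) := by
    intro i
    rw [← Finset.mul_sum, sumw' hk]
  simp_rw [h1]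
  rw [sumw' hj]
  ring

theorem stmt9 {n m : ℕ} (hn : 1 ≤ n) (hm : 1 ≤ m) (A B : Matrix (Fin n) (Fin m) ℝ)
    (hdom : ¬ Dominates ((1/2 : ℝ) • (A - B)) ((1/2 : ℝ) • (A + B))) :
    ∃ (x : Fin n → ℝ) (y : Fin m → ℝ),
      IsProbVec x ∧ IsProbVec y ∧ (∀ j, 0 < x j) ∧ (∀ k, 0 < y k) ∧
      Cfun A B x y < 0 := by
  unfold Dominates at hdom
  push_neg at hdom
  obtain ⟨j, j', k, k', h⟩ := hdom
  simp only [Matrix.smul_apply, Matrix.sub_apply, Matrix.add_apply, smul_eq_mul] at h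
  set α : ℝ := A j k + A j' k' - A j k' - A j' k with hα
  set β : ℝ := B j k + B j' k' - B j k' - B j' k with hβ
  have hαβ : 0 < α * β := by
    rw [show 1/2 * (A j k - B j k) + 1/2 * (A j' k' - B j' k') - 1/2 * (A j k' - B j k') -
        1/2 * (A j' k - B j' k) = (α - β)/2 by rw [hα, hβ]; ring,
      show 1/2 * (A j k + B j k) + 1/2 * (A j' k' + B j' k') - 1/2 * (A j k' + B j k') -
        1/2 * (A j' k + B j' k) = (α + β)/2 by rw [hα, hβ]; ring] at h
    have h2 := mul_self_lt_mul_self (abs_nonneg _) h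
    rw [abs_mul_abs_self, abs_mul_abs_self] at h2
    clear_value α β
    nlinarith [h2]
  have hj : j ≠ j' := by
    rintro rfl
    have h0 : α * β = 0 := by rw [hα]; ring
    linarith
  have hk : k ≠ k' := by
    rintro rfl
    have h0 : α * β = 0 := by rw [hα]; ring
    linarith
  -- basic facts about the weight vectors
  have hnpos : (0:ℝ) < n := by exact_mod_cast hn
  have hmpos : (0:ℝ) < m := by exact_mod_cast hm
  have hw0 : ∀ i : Fin n, 0 ≤ (if i = j then (1/2:ℝ) else if i = j' then 1/2 else 0) := by
    intro i; split_ifs <;> norm_num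
  have hv0 : ∀ l : Fin m, 0 ≤ (if l = k then (1/2:ℝ) else if l = k' then 1/2 else 0) := by
    intro l; split_ifs <;> norm_num
  have hwsum : ∑ i : Fin n, (if i = j then (1/2:ℝ) else if i = j' then 1/2 else 0) = 1 := by
    have := sumw' hj (fun _ => (1:ℝ))
    simpa using this
  have hvsum : ∑ l : Fin m, (if l = k then (1/2:ℝ) else if l = k' then 1/2 else 0) = 1 := by
    have := sumw' hk (fun _ => (1:ℝ))
    simpa using this
  -- the key value at the unperturbed vectors
  have key : Cfun A B (fun i => if i = j then (1/2:ℝ) else if i = j' then 1/2 else 0)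
      (fun l => if l = k then (1/2:ℝ) else if l = k' then 1/2 else 0) = -(α * β / 16) := by
    unfold Cfun
    have hA : ∀ i, ∑ l', A i l' * (if l' = k then (1/2:ℝ) else if l' = k' then 1/2 else 0)
        = (A i k + A i k') / 2 := fun i => sumw hk (A i)
    have hB : ∀ l, ∑ i', B i' l * (if i' = j then (1/2:ℝ) else if i' = j' then 1/2 else 0)
        = (B j l + B j' l) / 2 := fun l => sumw hj (fun i' => B i' l)
    simp_rw [hA, hB, mul_assoc]
    rw [dsum hj hk (fun i l => (A i l - (A i k + A i k') / 2) * (B i l - (B j l + B j' l) / 2))]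
    rw [hα, hβ]; ring
  -- perturbed vectors
  set X : ℝ → Fin n → ℝ := fun t i =>
    (1 - t) * (if i = j then (1/2:ℝ) else if i = j' then 1/2 else 0) + t * (1/n) with hX
  set Y : ℝ → Fin m → ℝ := fun t l =>
    (1 - t) * (if l = k then (1/2:ℝ) else if l = k' then 1/2 else 0) + t * (1/m) with hY
  have hf : Continuous (fun t => Cfun A B (X t) (Y t)) := by
    unfold Cfun
    rw [hX, hY]
    fun_prop
  have hopen : IsOpen {t : ℝ | Cfun A B (X t) (Y t) < 0} := isOpen_lt hf continuous_const
  have h0mem : (0:ℝ) ∈ {t : ℝ | Cfun A B (X t) (Y t) < 0} := by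
    have hX0 : X 0 = fun i => if i = j then (1/2:ℝ) else if i = j' then 1/2 else 0 := by
      funext i; rw [hX]; ring
    have hY0 : Y 0 = fun l => if l = k then (1/2:ℝ) else if l = k' then 1/2 else 0 := by
      funext l; rw [hY]; ring
    simp only [Set.mem_setOf_eq, hX0, hY0, key]
    clear_value α β
    linarith [hαβ]
  obtain ⟨r, hr0, hball⟩ := Metric.isOpen_iff.mp hopen 0 h0mem
  set δ : ℝ := min r 1 / 2 with hδ
  have hδpos : 0 < δ := by rw [hδ]; positivity
  have hδle : δ ≤ 1/2 := by
    rw [hδ]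
    have : min r 1 ≤ 1 := min_le_right _ _
    linarith
  have hδball : δ ∈ Metric.ball (0:ℝ) r := by
    rw [Metric.mem_ball, Real.dist_eq, sub_zero, abs_of_pos hδpos, hδ]
    have : min r 1 ≤ r := min_le_left _ _
    linarith
  have hcf : Cfun A B (X δ) (Y δ) < 0 := hball hδball
  refine ⟨X δ, Y δ, ⟨fun i => ?_, ?_⟩, ⟨fun l => ?_, ?_⟩, fun i => ?_, fun l => ?_, hcf⟩
  · have h1 : 0 ≤ (1 - δ) * (if i = j then (1/2:ℝ) else if i = j' then 1/2 else 0) :=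
      mul_nonneg (by linarith) (hw0 i)
    have h2 : 0 < δ * (1/n) := by positivity
    rw [hX]; dsimp only; linarith
  · rw [hX]
    simp only
    rw [Finset.sum_add_distrib, ← Finset.mul_sum, hwsum, Finset.sum_const, Finset.card_univ,
      Fintype.card_fin, nsmul_eq_mul]
    field_simp
    ring
  · have h1 : 0 ≤ (1 - δ) * (if l = k then (1/2:ℝ) else if l = k' then 1/2 else 0) :=
      mul_nonneg (by linarith) (hv0 l)
    have h2 : 0 < δ * (1/m) := by positivity
    rw [hY]; dsimp only; linarith
  · rw [hY]
    simp only
    rw [Finset.sum_add_distrib, ← Finset.mul_sum, hvsum, Finset.sum_const, Finset.card_univ,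
      Fintype.card_fin, nsmul_eq_mul]
    field_simp
    ring
  · have h1 : 0 ≤ (1 - δ) * (if i = j then (1/2:ℝ) else if i = j' then 1/2 else 0) :=
      mul_nonneg (by linarith) (hw0 i)
    have h2 : 0 < δ * (1/n) := by positivity
    rw [hX]; dsimp only; linarith
  · have h1 : 0 ≤ (1 - δ) * (if l = k then (1/2:ℝ) else if l = k' then 1/2 else 0) :=
      mul_nonneg (by linarith) (hv0 l)
    have h2 : 0 < δ * (1/m) := by positivity
    rw [hY]; dsimp only; linarith
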